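/- Let D be a domain of finite character such that for every maximal ideal M, the localization D_M is a valuation domain whose value group is a complete (i.e., either trivial, cyclic, or all of ℝ) subgroup of the reals. Then D is a sharp domain. -/

import Mathlib

/-- A domain `R` is *sharp* if whenever `I ⊇ A*B` with `I, A, B` nonzero ideals,
there exist ideals `A' ⊇ A` and `B' ⊇ B` such that `I = A'*B'`. -/
def IsSharpDomain (R : Type*) [CommRing R] : Prop :=
  ∀ I A B : Ideal R, I ≠ ⊥ → A ≠ ⊥ → B ≠ ⊥ → A * B ≤ I →
    ∃ A' B' : Ideal R, A ≤ A' ∧ B ≤ B' ∧ I = A' * B'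

/-- A domain has *finite character* if every nonzero element lies in only finitely
many maximal ideals. -/
def FiniteCharacter (R : Type*) [CommRing R] : Prop :=
  ∀ x : R, x ≠ 0 → {M : Ideal R | M.IsMaximal ∧ x ∈ M}.Finite

/-- A subset of `ℝ` is a *complete subgroup of the reals* iff it is trivial,
cyclic, or all of `ℝ`. -/
def IsCompleteRealSubgroup (S : Set ℝ) : Prop :=
  S = {0} ∨ (∃ a : ℝ, S = {r | ∃ n : ℤ, r = n • a}) ∨ S = Set.univ

open Multiplicative

namespace SharpAux

noncomputable abbrev oz (r : ℝ) : WithZero (Multiplicative ℝ) :=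
  ((Multiplicative.ofAdd r : Multiplicative ℝ) : WithZero (Multiplicative ℝ))

lemma oz_le_oz {r s : ℝ} : oz r ≤ oz s ↔ r ≤ s := by
  simp [oz, WithZero.coe_le_coe, Multiplicative.ofAdd_le]

lemma oz_lt_oz {r s : ℝ} : oz r < oz s ↔ r < s := by
  simp [oz, WithZero.coe_lt_coe, Multiplicative.ofAdd_lt]

lemma oz_mul (r s : ℝ) : oz (r + s) = oz r * oz s := by
  simp [oz, ← WithZero.coe_mul, ← ofAdd_add]

lemma oz_ne_zero (r : ℝ) : oz r ≠ 0 := WithZero.coe_ne_zero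

lemma zero_lt_oz (r : ℝ) : 0 < oz r := WithZero.zero_lt_coe _

lemma oz_zero : oz 0 = 1 := by simp [oz]

lemma oz_pow (r : ℝ) (n : ℕ) : oz ((n : ℝ) * r) = oz r ^ n := by
  have h : (n : ℝ) * r = n • r := by simp
  rw [oz, h, ofAdd_nsmul, WithZero.coe_pow]

lemma exists_oz {g : WithZero (Multiplicative ℝ)} (hg : g ≠ 0) : ∃ r : ℝ, g = oz r := by
  obtain ⟨m, rfl⟩ := WithZero.ne_zero_iff_exists.mp hg
  exact ⟨Multiplicative.toAdd m, by simp [oz]⟩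


structure LocalV (R : Type*) [CommRing R] [IsDomain R] (M : Ideal R) where
  v : Valuation (FractionRing R) (WithZero (Multiplicative ℝ))
  spec : ∀ x : FractionRing R, v x ≤ 1 ↔
    ∃ a s : R, s ∉ M ∧ x * algebraMap R (FractionRing R) s = algebraMap R (FractionRing R) a
  complete : IsCompleteRealSubgroup
    {r : ℝ | ∃ x : FractionRing R, v x = (Multiplicative.ofAdd r : Multiplicative ℝ)}
  isMax : M.IsMaximal

variable {R : Type*} [CommRing R] [IsDomain R] {M : Ideal R}

/-- value of an element of R -/
noncomputable def LocalV.w (L : LocalV R M) (r : R) : WithZero (Multiplicative ℝ) :=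
  L.v (algebraMap R (FractionRing R) r)

lemma LocalV.v_eq_zero_iff (L : LocalV R M) {x : FractionRing R} : L.v x = 0 ↔ x = 0 := by
  constructor
  · intro h
    by_contra hx
    have h1 : L.v x * L.v x⁻¹ = 1 := by
      rw [← Valuation.map_mul, mul_inv_cancel₀ hx, Valuation.map_one]
    rw [h, zero_mul] at h1
    exact zero_ne_one h1
  · rintro rfl; exact Valuation.map_zero _

lemma LocalV.w_eq_zero_iff (L : LocalV R M) {r : R} : L.w r = 0 ↔ r = 0 := by
  rw [LocalV.w, L.v_eq_zero_iff, map_eq_zero_iff _ (IsFractionRing.injective R (FractionRing R))]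

lemma LocalV.w_mul (L : LocalV R M) (r s : R) : L.w (r * s) = L.w r * L.w s := by
  simp [LocalV.w, map_mul]

lemma LocalV.w_le_one (L : LocalV R M) (r : R) : L.w r ≤ 1 := by
  rw [LocalV.w, L.spec]
  exact ⟨r, 1, fun h => L.isMax.ne_top (M.eq_top_of_isUnit_mem h isUnit_one), by simp⟩

lemma LocalV.w_zero (L : LocalV R M) : L.w 0 = 0 := by simp [LocalV.w]

lemma LocalV.w_one_of_not_mem (L : LocalV R M) {s : R} (hs : s ∉ M) :
    L.w s = 1 := by
  have hs0 : s ≠ 0 := fun h => hs (h ▸ M.zero_mem)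
  have hφ : algebraMap R (FractionRing R) s ≠ 0 := fun h => hs0
    (map_eq_zero_iff _ (IsFractionRing.injective R (FractionRing R)) |>.mp h)
  have h1 : L.v (algebraMap R (FractionRing R) s)⁻¹ ≤ 1 := by
    rw [L.spec]
    exact ⟨1, s, hs, by rw [inv_mul_cancel₀ hφ, map_one]⟩
  rw [Valuation.map_inv] at h1
  have h2 := L.w_le_one s
  rw [LocalV.w] at h2 ⊢
  have hne : L.v (algebraMap R (FractionRing R) s) ≠ 0 := fun h0 => hφ (L.v_eq_zero_iff.mp h0)
  refine le_antisymm h2 ((inv_le_one₀ (zero_lt_iff.mpr hne)).mp h1)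

lemma LocalV.w_lt_one_of_mem (L : LocalV R M) {s : R} (hs : s ∈ M) :
    L.w s < 1 := by
  rcases eq_or_ne s 0 with rfl | hs0
  · rw [L.w_zero]; exact zero_lt_one
  refine lt_of_le_of_ne (L.w_le_one s) ?_
  intro heq
  have hφ : algebraMap R (FractionRing R) s ≠ 0 := fun h => hs0
    (map_eq_zero_iff _ (IsFractionRing.injective R (FractionRing R)) |>.mp h)
  have h1 : L.v (algebraMap R (FractionRing R) s)⁻¹ ≤ 1 := by
    rw [Valuation.map_inv, LocalV.w] at *
    rw [heq]; norm_num
  rw [L.spec] at h1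
  obtain ⟨a, t, ht, hat⟩ := h1
  rw [inv_mul_eq_iff_eq_mul₀ hφ, ← map_mul] at hat
  have : t = s * a := IsFractionRing.injective R (FractionRing R) hat
  rw [mul_comm] at this
  exact ht (this ▸ M.mul_mem_left a hs)

/-- divisibility from valuations -/
lemma LocalV.exists_smul (L : LocalV R M) {y r : R} (hr : r ≠ 0) (h : L.w y ≤ L.w r) :
    ∃ s, s ∉ M ∧ ∃ a, s * y = r * a := by
  set φ := algebraMap R (FractionRing R)
  have hφr : φ r ≠ 0 := fun hh => hr
    (map_eq_zero_iff _ (IsFractionRing.injective R (FractionRing R)) |>.mp hh)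
  have hx : L.v (φ y * (φ r)⁻¹) ≤ 1 := by
    rw [Valuation.map_mul, Valuation.map_inv]
    have hne : L.v (φ r) ≠ 0 := fun h0 => hφr (L.v_eq_zero_iff.mp h0)
    rw [mul_inv_le_iff₀ (zero_lt_iff.mpr hne), one_mul]
    exact h
  rw [L.spec] at hx
  obtain ⟨a, s, hs, has⟩ := hx
  refine ⟨s, hs, a, ?_⟩
  apply IsFractionRing.injective R (FractionRing R)
  rw [map_mul, map_mul]
  field_simp at has ⊢
  rw [mul_comm (φ y) (φ s)] at has
  linear_combination has

lemma LocalV.le_of_smul (L : LocalV R M) {y r s a : R} (hs : s ∉ M)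
    (hh : s * y = r * a) : L.w y ≤ L.w r := by
  have h1 : L.w s * L.w y = L.w r * L.w a := by rw [← L.w_mul, ← L.w_mul, hh]
  rw [L.w_one_of_not_mem hs, one_mul] at h1
  calc L.w y = L.w r * L.w a := h1
    _ ≤ L.w r * 1 := mul_le_mul_right (L.w_le_one a) _
    _ = L.w r := mul_one _

/-! ### value sets of ideals -/

def LocalV.gam (L : LocalV R M) : Set ℝ :=
  {r : ℝ | ∃ x : FractionRing R, L.v x = (Multiplicative.ofAdd r : Multiplicative ℝ)}

lemma LocalV.gam_complete (L : LocalV R M) : IsCompleteRealSubgroup L.gam := L.complete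

lemma LocalV.mem_gam_iff (L : LocalV R M) {r : ℝ} : r ∈ L.gam ↔ ∃ x, L.v x = oz r := Iff.rfl

lemma LocalV.gam_sub (L : LocalV R M) {r s : ℝ} (hr : r ∈ L.gam) (hs : s ∈ L.gam) :
    r - s ∈ L.gam := by
  obtain ⟨x, hx⟩ := hr
  obtain ⟨y, hy⟩ := hs
  have hy0 : y ≠ 0 := by
    intro h; rw [h, Valuation.map_zero] at hy; exact (oz_ne_zero s) hy.symm
  refine ⟨x * y⁻¹, ?_⟩
  rw [Valuation.map_mul, Valuation.map_inv, hx, hy]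
  show oz r * (oz s)⁻¹ = oz (r - s)
  rw [mul_inv_eq_iff_eq_mul₀ (oz_ne_zero s), ← oz_mul, sub_add_cancel]

def LocalV.eset (L : LocalV R M) (X : Ideal R) : Set ℝ :=
  {r : ℝ | ∃ x ∈ X, x ≠ 0 ∧ L.w x = oz r}

lemma LocalV.eset_subset_gam (L : LocalV R M) (X : Ideal R) : L.eset X ⊆ L.gam := by
  rintro r ⟨x, _, _, hx⟩
  exact ⟨algebraMap R (FractionRing R) x, hx⟩

lemma LocalV.eset_nonpos (L : LocalV R M) (X : Ideal R) {r : ℝ} (hr : r ∈ L.eset X) : r ≤ 0 := by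
  obtain ⟨x, _, _, hx⟩ := hr
  have := L.w_le_one x
  rw [hx, ← oz_zero] at this
  exact oz_le_oz.mp this

lemma LocalV.eset_nonempty (L : LocalV R M) {X : Ideal R} (hX : X ≠ ⊥) : (L.eset X).Nonempty := by
  obtain ⟨x, hxX, hx0⟩ := Submodule.exists_mem_ne_zero_of_ne_bot hX
  have : L.w x ≠ 0 := fun h => hx0 (L.w_eq_zero_iff.mp h)
  obtain ⟨r, hr⟩ := exists_oz this
  exact ⟨r, x, hxX, hx0, hr⟩

lemma LocalV.eset_bddAbove (L : LocalV R M) (X : Ideal R) : BddAbove (L.eset X) :=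
  ⟨0, fun r hr => L.eset_nonpos X hr⟩

noncomputable def LocalV.gsup (L : LocalV R M) (X : Ideal R) : ℝ := sSup (L.eset X)

lemma LocalV.gsup_nonpos (L : LocalV R M) {X : Ideal R} (hX : X ≠ ⊥) : L.gsup X ≤ 0 :=
  csSup_le (L.eset_nonempty hX) (fun _ h => L.eset_nonpos X h)

lemma LocalV.le_gsup (L : LocalV R M) {X : Ideal R} {r : ℝ} (hr : r ∈ L.eset X) :
    r ≤ L.gsup X := le_csSup (L.eset_bddAbove X) hr

lemma LocalV.w_mem_eset (L : LocalV R M) {X : Ideal R} {x : R} (hx : x ∈ X) (hx0 : x ≠ 0)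
    {r : ℝ} (hr : L.w x = oz r) : r ∈ L.eset X := ⟨x, hx, hx0, hr⟩

lemma LocalV.w_le_gsup (L : LocalV R M) {X : Ideal R} {x : R} (hx : x ∈ X) :
    L.w x ≤ oz (L.gsup X) := by
  rcases eq_or_ne x 0 with rfl | hx0
  · rw [L.w_zero]; exact le_of_lt (zero_lt_oz _)
  · have : L.w x ≠ 0 := fun h => hx0 (L.w_eq_zero_iff.mp h)
    obtain ⟨r, hr⟩ := exists_oz this
    rw [hr, oz_le_oz]
    exact L.le_gsup (L.w_mem_eset hx hx0 hr)

/-- either the sup of the value set is attained, or the value group is all of ℝ -/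
lemma LocalV.gsup_mem_or_univ (L : LocalV R M) {X : Ideal R} (hX : X ≠ ⊥) :
    L.gsup X ∈ L.eset X ∨ L.gam = Set.univ := by
  have hE : L.eset X ⊆ L.gam := L.eset_subset_gam X
  have hn := L.eset_nonempty hX
  have hb := L.eset_bddAbove X
  have htriv : L.gam = {0} → L.gsup X ∈ L.eset X := by
    intro h
    have hE0 : L.eset X = {0} := by
      apply subset_antisymm (h ▸ hE)
      rintro r (rfl : r = 0)
      obtain ⟨e, he⟩ := L.eset_nonempty hX
      have : e = 0 := by have := hE he; rw [h] at this; exact this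
      exact this ▸ he
    rw [LocalV.gsup, hE0, csSup_singleton]
    exact rfl
  rcases L.gam_complete with h | ⟨a, h⟩ | h
  · exact Or.inl (htriv h)
  · rcases eq_or_ne a 0 with rfl | ha
    · refine Or.inl (htriv ?_)
      rw [h]; ext r; simp
    · left
      set b := |a| with hb'
      have hbpos : 0 < b := abs_pos.mpr ha
      have hgam : ∀ r ∈ L.gam, ∃ n : ℤ, r = n * b := by
        intro r hr
        rw [h] at hr
        obtain ⟨n, rfl⟩ := hr
        rcases abs_cases a with ⟨h1, _⟩ | ⟨h1, _⟩
        · exact ⟨n, by rw [hb', h1, zsmul_eq_mul]⟩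
        · exact ⟨-n, by rw [hb', h1, zsmul_eq_mul]; push_cast; ring⟩
      obtain ⟨c, hc⟩ := L.eset_bddAbove X
      have hbdd : ∃ ub : ℤ, ∀ z : ℤ, ((z : ℝ) * b ∈ L.eset X) → z ≤ ub := by
        refine ⟨⌈c / b⌉, fun z hz => ?_⟩
        have : (z : ℝ) * b ≤ c := hc hz
        have : (z : ℝ) ≤ c / b := (le_div_iff₀ hbpos).mpr this
        exact_mod_cast this.trans (Int.le_ceil _)
      obtain ⟨e, he⟩ := L.eset_nonempty hX
      obtain ⟨n0, hn0⟩ := hgam e (hE he)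
      obtain ⟨nmax, hnmax, hmax⟩ := Int.exists_greatest_of_bdd hbdd ⟨n0, hn0 ▸ he⟩
      have hsup : L.gsup X = (nmax : ℝ) * b := by
        refine le_antisymm (csSup_le hn ?_) (le_csSup hb hnmax)
        · intro r hr
          obtain ⟨n, rfl⟩ := hgam r (hE hr)
          have : n ≤ nmax := hmax n hr
          exact mul_le_mul_of_nonneg_right (by exact_mod_cast this) hbpos.le
      rw [LocalV.gsup] at hsup ⊢
      rw [hsup]; exact hnmax
  · exact Or.inr h

lemma LocalV.exists_elem_of_val (L : LocalV R M) {t : ℝ} (ht : t ≤ 0) (htg : t ∈ L.gam) :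
    ∃ y : R, y ≠ 0 ∧ L.w y = oz t := by
  obtain ⟨x, hx⟩ := htg
  have hx1 : L.v x ≤ 1 := by
    rw [show L.v x = oz t from hx, ← oz_zero, oz_le_oz]; exact ht
  rw [L.spec] at hx1
  obtain ⟨a, s, hs, has⟩ := hx1
  have hx0 : x ≠ 0 := by
    intro h; rw [h, Valuation.map_zero] at hx; exact (oz_ne_zero t) hx.symm
  refine ⟨a, ?_, ?_⟩
  · intro h
    rw [h, map_zero] at has
    have hs0 : algebraMap R (FractionRing R) s ≠ 0 := by
      intro hh
      exact hs (((map_eq_zero_iff _ (IsFractionRing.injective R (FractionRing R))).mp hh) ▸ M.zero_mem)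
    exact hx0 ((mul_eq_zero.mp has).resolve_right hs0)
  · have : L.w a = L.v x * L.w s := by rw [LocalV.w, LocalV.w, ← has, Valuation.map_mul]
    rw [this, L.w_one_of_not_mem hs, mul_one]
    exact hx

/-! ### closed and open value ideals -/

def LocalV.jcl (L : LocalV R M) (t : ℝ) : Ideal R where
  carrier := {y | L.w y ≤ oz t}
  zero_mem' := by show L.w 0 ≤ oz t; rw [L.w_zero]; exact zero_le'
  add_mem' := by
    intro a b ha hb
    show L.w (a + b) ≤ oz t
    have : L.w (a + b) ≤ max (L.w a) (L.w b) := by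
      rw [LocalV.w, map_add]; exact Valuation.map_add _ _ _
    exact this.trans (max_le ha hb)
  smul_mem' := by
    intro c y hy
    show L.w (c * y) ≤ oz t
    rw [L.w_mul]
    calc L.w c * L.w y ≤ 1 * L.w y := mul_le_mul_left (L.w_le_one c) _
      _ = L.w y := one_mul _
      _ ≤ oz t := hy

def LocalV.jop (L : LocalV R M) (t : ℝ) : Ideal R where
  carrier := {y | L.w y < oz t}
  zero_mem' := by show L.w 0 < oz t; rw [L.w_zero]; exact zero_lt_oz t
  add_mem' := by
    intro a b ha hb
    show L.w (a + b) < oz t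
    have : L.w (a + b) ≤ max (L.w a) (L.w b) := by
      rw [LocalV.w, map_add]; exact Valuation.map_add _ _ _
    exact lt_of_le_of_lt this (max_lt ha hb)
  smul_mem' := by
    intro c y hy
    show L.w (c * y) < oz t
    rw [L.w_mul]
    calc L.w c * L.w y ≤ 1 * L.w y := mul_le_mul_left (L.w_le_one c) _
      _ = L.w y := one_mul _
      _ < oz t := hy

lemma LocalV.mem_jcl (L : LocalV R M) {t : ℝ} {y : R} : y ∈ L.jcl t ↔ L.w y ≤ oz t := Iff.rfl

lemma LocalV.mem_jop (L : LocalV R M) {t : ℝ} {y : R} : y ∈ L.jop t ↔ L.w y < oz t := Iff.rfl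

lemma LocalV.jcl_zero (L : LocalV R M) : L.jcl 0 = ⊤ := by
  rw [eq_top_iff]
  intro y _
  rw [L.mem_jcl, oz_zero]
  exact L.w_le_one y

/-! ### contraction of the extension of an ideal -/

def LocalV.conS (L : LocalV R M) (X : Ideal R) : Set R :=
  {y | ∃ x ∈ X, x ≠ 0 ∧ L.w y ≤ L.w x}

lemma LocalV.mem_conS_self (L : LocalV R M) {X : Ideal R} {x : R} (hx : x ∈ X) (hx0 : x ≠ 0) :
    x ∈ L.conS X := ⟨x, hx, hx0, le_refl _⟩

lemma LocalV.zero_mem_conS (L : LocalV R M) {X : Ideal R} (hX : X ≠ ⊥) : (0 : R) ∈ L.conS X := by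
  obtain ⟨x, hxX, hx0⟩ := Submodule.exists_mem_ne_zero_of_ne_bot hX
  exact ⟨x, hxX, hx0, by rw [L.w_zero]; exact zero_le'⟩

lemma LocalV.conS_eq_univ_of_not_le (L : LocalV R M) {X : Ideal R} (hX : ¬ X ≤ M) :
    L.conS X = Set.univ := by
  obtain ⟨x, hxX, hxM⟩ := SetLike.not_le_iff_exists.mp hX
  refine Set.eq_univ_of_forall (fun y => ⟨x, hxX, fun h => hxM (h ▸ M.zero_mem), ?_⟩)
  rw [L.w_one_of_not_mem hxM]
  exact L.w_le_one y

lemma LocalV.exists_bound_of_mem_mul (L : LocalV R M) {X Y : Ideal R} {z : R} (hz : z ∈ X * Y) :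
    z = 0 ∨ ∃ x ∈ X, ∃ y ∈ Y, x ≠ 0 ∧ y ≠ 0 ∧ L.w z ≤ L.w x * L.w y := by
  refine Submodule.mul_induction_on hz ?_ ?_
  · intro m hm n hn
    rcases eq_or_ne (m * n) 0 with h | h
    · exact Or.inl h
    · refine Or.inr ⟨m, hm, n, hn, fun h0 => h (by rw [h0, zero_mul]),
        fun h0 => h (by rw [h0, mul_zero]), ?_⟩
      rw [L.w_mul]
  · rintro z1 z2 (rfl | ⟨x1, hx1, y1, hy1, hx10, hy10, hb1⟩)
    · intro h2
      rcases h2 with rfl | ⟨x2, hx2, y2, hy2, hx20, hy20, hb2⟩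
      · exact Or.inl (zero_add 0)
      · exact Or.inr ⟨x2, hx2, y2, hy2, hx20, hy20, by rw [zero_add]; exact hb2⟩
    · rintro (rfl | ⟨x2, hx2, y2, hy2, hx20, hy20, hb2⟩)
      · exact Or.inr ⟨x1, hx1, y1, hy1, hx10, hy10, by rw [add_zero]; exact hb1⟩
      · have hm : L.w (z1 + z2) ≤ max (L.w z1) (L.w z2) := by
          rw [LocalV.w, map_add]; exact Valuation.map_add _ _ _
        rcases le_total (L.w x1 * L.w y1) (L.w x2 * L.w y2) with h | h
        · exact Or.inr ⟨x2, hx2, y2, hy2, hx20, hy20,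
            hm.trans (max_le (hb1.trans h) hb2)⟩
        · exact Or.inr ⟨x1, hx1, y1, hy1, hx10, hy10,
            hm.trans (max_le hb1 (hb2.trans h))⟩

lemma LocalV.mem_conS_mul (L : LocalV R M) {X Y : Ideal R} {y : R} :
    y ∈ L.conS (X * Y) ↔ ∃ x ∈ X, ∃ z ∈ Y, x ≠ 0 ∧ z ≠ 0 ∧ L.w y ≤ L.w x * L.w z := by
  constructor
  · rintro ⟨u, hu, hu0, hle⟩
    rcases L.exists_bound_of_mem_mul hu with rfl | ⟨x, hx, z, hz, hx0, hz0, hb⟩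
    · exact absurd rfl hu0
    · exact ⟨x, hx, z, hz, hx0, hz0, hle.trans hb⟩
  · rintro ⟨x, hx, z, hz, hx0, hz0, hle⟩
    exact ⟨x * z, Ideal.mul_mem_mul hx hz, mul_ne_zero hx0 hz0, by rw [L.w_mul]; exact hle⟩

lemma LocalV.conS_mul_of_not_le (L : LocalV R M) {X Y : Ideal R} (hX : X ≠ ⊥) (hY : ¬ Y ≤ M) :
    L.conS (X * Y) = L.conS X := by
  obtain ⟨t, htY, htM⟩ := SetLike.not_le_iff_exists.mp hY
  have ht0 : t ≠ 0 := fun h => htM (h ▸ M.zero_mem)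
  ext y
  rw [L.mem_conS_mul]
  constructor
  · rintro ⟨x, hx, z, hz, hx0, hz0, hle⟩
    refine ⟨x, hx, hx0, hle.trans ?_⟩
    calc L.w x * L.w z ≤ L.w x * 1 := mul_le_mul_right (L.w_le_one z) _
      _ = L.w x := mul_one _
  · rintro ⟨x, hx, hx0, hle⟩
    refine ⟨x, hx, t, htY, hx0, ht0, ?_⟩
    rw [L.w_one_of_not_mem htM, mul_one]
    exact hle

lemma LocalV.conS_eq_jcl (L : LocalV R M) {X : Ideal R} (hatt : L.gsup X ∈ L.eset X) :
    L.conS X = ↑(L.jcl (L.gsup X)) := by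
  obtain ⟨x0, hx0X, hx00, hw0⟩ := hatt
  ext y
  constructor
  · rintro ⟨x, hx, hx0, hle⟩
    exact hle.trans (L.w_le_gsup hx)
  · intro hy
    exact ⟨x0, hx0X, hx00, by rw [hw0]; exact hy⟩

lemma LocalV.conS_eq_jop (L : LocalV R M) {X : Ideal R} (hX : X ≠ ⊥)
    (hatt : L.gsup X ∉ L.eset X) : L.conS X = ↑(L.jop (L.gsup X)) := by
  ext y
  constructor
  · rintro ⟨x, hx, hx0, hle⟩
    have : L.w x ≠ 0 := fun h => hx0 (L.w_eq_zero_iff.mp h)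
    obtain ⟨r, hr⟩ := exists_oz this
    have hrE : r ∈ L.eset X := ⟨x, hx, hx0, hr⟩
    have : r < L.gsup X := lt_of_le_of_ne (L.le_gsup hrE) (fun h => hatt (h ▸ hrE))
    show L.w y < oz (L.gsup X)
    exact lt_of_le_of_lt (hle.trans (le_of_eq hr)) (oz_lt_oz.mpr this)
  · intro hy
    rcases eq_or_ne (L.w y) 0 with h0 | h0
    · obtain ⟨x, hx, hx0⟩ := Submodule.exists_mem_ne_zero_of_ne_bot hX
      exact ⟨x, hx, hx0, by rw [h0]; exact zero_le'⟩
    · obtain ⟨r, hr⟩ := exists_oz h0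
      have : r < L.gsup X := by
        have := L.mem_jop.mp hy
        rw [hr] at this
        exact oz_lt_oz.mp this
      obtain ⟨e, heE, hre⟩ := exists_lt_of_lt_csSup (L.eset_nonempty hX) this
      obtain ⟨x, hx, hx0, hwx⟩ := heE
      exact ⟨x, hx, hx0, by rw [hr, hwx]; exact oz_le_oz.mpr hre.le⟩

/-! ### contractions of products of value ideals -/

lemma LocalV.conS_jcl_mul_jcl (L : LocalV R M) {s t : ℝ} (hs : s ≤ 0) (ht : t ≤ 0)
    (hsg : s ∈ L.gam) (htg : t ∈ L.gam) :
    L.conS (L.jcl s * L.jcl t) = ↑(L.jcl (s + t)) := by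
  obtain ⟨xs, hxs0, hxs⟩ := L.exists_elem_of_val hs hsg
  obtain ⟨xt, hxt0, hxt⟩ := L.exists_elem_of_val ht htg
  ext y
  rw [L.mem_conS_mul]
  constructor
  · rintro ⟨x, hx, z, hz, hx0, hz0, hle⟩
    show L.w y ≤ oz (s + t)
    rw [oz_mul]
    exact hle.trans (mul_le_mul' (L.mem_jcl.mp hx) (L.mem_jcl.mp hz))
  · intro hy
    refine ⟨xs, L.mem_jcl.mpr (le_of_eq hxs), xt, L.mem_jcl.mpr (le_of_eq hxt), hxs0, hxt0, ?_⟩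
    rw [hxs, hxt, ← oz_mul]
    exact hy

lemma LocalV.conS_jcl_mul_jop (L : LocalV R M) {s t : ℝ} (hs : s ≤ 0) (ht : t ≤ 0)
    (huniv : L.gam = Set.univ) :
    L.conS (L.jcl s * L.jop t) = ↑(L.jop (s + t)) := by
  have hsg : s ∈ L.gam := by rw [huniv]; trivial
  obtain ⟨xs, hxs0, hxs⟩ := L.exists_elem_of_val hs hsg
  ext y
  rw [L.mem_conS_mul]
  constructor
  · rintro ⟨x, hx, z, hz, hx0, hz0, hle⟩
    show L.w y < oz (s + t)
    rw [oz_mul]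
    exact lt_of_le_of_lt hle
      (mul_lt_mul_of_le_of_lt_of_nonneg_of_pos (L.mem_jcl.mp hx) (L.mem_jop.mp hz) zero_le' (zero_lt_oz s))
  · intro hy
    have hy' : L.w y < oz (s + t) := hy
    rcases eq_or_ne (L.w y) 0 with h0 | h0
    · have h1 : t - 1 ≤ 0 := by linarith
      obtain ⟨z, hz0, hz⟩ := L.exists_elem_of_val h1 (by rw [huniv]; trivial)
      refine ⟨xs, L.mem_jcl.mpr (le_of_eq hxs), z,
        L.mem_jop.mpr (by rw [hz]; exact oz_lt_oz.mpr (by linarith)), hxs0, hz0, ?_⟩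
      rw [h0]; exact zero_le'
    · obtain ⟨r, hr⟩ := exists_oz h0
      have hrst : r < s + t := by rw [hr] at hy'; exact oz_lt_oz.mp hy'
      have hr0 : r - s ≤ 0 := by
        have : r ≤ 0 := by
          have := L.w_le_one y
          rw [hr, ← oz_zero] at this
          exact oz_le_oz.mp this
        nlinarith [hs, ht, hrst]
      obtain ⟨z, hz0, hz⟩ := L.exists_elem_of_val hr0 (by rw [huniv]; trivial)
      refine ⟨xs, L.mem_jcl.mpr (le_of_eq hxs), z,
        L.mem_jop.mpr (by rw [hz]; exact oz_lt_oz.mpr (by linarith)), hxs0, hz0, ?_⟩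
      rw [hr, hxs, hz, ← oz_mul]
      exact oz_le_oz.mpr (by linarith)

lemma LocalV.conS_jop_self (L : LocalV R M) {c : ℝ} (hc : c ≤ 0) (huniv : L.gam = Set.univ) :
    L.conS (L.jop c) = ↑(L.jop c) := by
  ext y
  constructor
  · rintro ⟨x, hx, hx0, hle⟩
    exact lt_of_le_of_lt hle (L.mem_jop.mp hx)
  · intro hy
    rcases eq_or_ne y 0 with rfl | hy0
    · obtain ⟨z, hz0, hz⟩ := L.exists_elem_of_val (show c - 1 ≤ 0 by linarith)
        (by rw [huniv]; trivial)
      exact ⟨z, L.mem_jop.mpr (by rw [hz]; exact oz_lt_oz.mpr (by linarith)), hz0,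
        by rw [L.w_zero]; exact zero_le'⟩
    · exact ⟨y, hy, hy0, le_refl _⟩

lemma LocalV.le_jcl_gsup (L : LocalV R M) (X : Ideal R) : X ≤ L.jcl (L.gsup X) :=
  fun _ hx => L.w_le_gsup hx

/-- The main local factorization lemma. -/
lemma LocalV.local_sharp (L : LocalV R M) {I A B : Ideal R} (hI : I ≠ ⊥) (hA : A ≠ ⊥)
    (hB : B ≠ ⊥) (hAB : A * B ≤ I) :
    ∃ A' B' : Ideal R, A ≤ A' ∧ B ≤ B' ∧ L.conS I ⊆ ↑A' ∧ L.conS I ⊆ ↑B' ∧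
      L.conS (A' * B') = L.conS I := by
  set c := L.gsup I with hc
  set α := L.gsup A with halpha
  set β := L.gsup B with hbeta
  have hc0 : c ≤ 0 := L.gsup_nonpos hI
  have hα0 : α ≤ 0 := L.gsup_nonpos hA
  have hβ0 : β ≤ 0 := L.gsup_nonpos hB
  have hkey : ∀ ea ∈ L.eset A, ∀ eb ∈ L.eset B, ea + eb ≤ c := by
    rintro ea ⟨a, haA, ha0, hwa⟩ eb ⟨b, hbB, hb0, hwb⟩
    refine L.le_gsup ⟨a * b, hAB (Ideal.mul_mem_mul haA hbB), mul_ne_zero ha0 hb0, ?_⟩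
    rw [L.w_mul, hwa, hwb, oz_mul]
  have hαβ : α + β ≤ c := by
    have h1 : α ≤ c - β := csSup_le (L.eset_nonempty hA) (fun ea hea => by
      have h2 : β ≤ c - ea := csSup_le (L.eset_nonempty hB)
        (fun eb heb => by linarith [hkey ea hea eb heb])
      linarith)
    linarith
  by_cases hattI : c ∈ L.eset I
  · -- closed case
    have hcg : c ∈ L.gam := L.eset_subset_gam I hattI
    have hαg : α ∈ L.gam := by
      rcases L.gsup_mem_or_univ hA with h | h
      · exact L.eset_subset_gam A h
      · rw [h]; trivial
    set d := max α c with hd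
    have hdg : d ∈ L.gam := by
      rcases max_choice α c with h | h <;> rw [hd, h] <;> assumption
    have hd0 : d ≤ 0 := max_le hα0 hc0
    have hcd : c ≤ d := le_max_right _ _
    have hcdg : c - d ∈ L.gam := L.gam_sub hcg hdg
    have hcd0 : c - d ≤ 0 := by linarith
    refine ⟨L.jcl d, L.jcl (c - d), ?_, ?_, ?_, ?_, ?_⟩
    · exact (L.le_jcl_gsup A).trans (fun y hy => (L.mem_jcl.mp hy).trans
        (oz_le_oz.mpr (le_max_left _ _)))
    · refine (L.le_jcl_gsup B).trans (fun y hy => (L.mem_jcl.mp hy).trans (oz_le_oz.mpr ?_))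
      rcases max_choice α c with h | h
      · rw [hd, h]; linarith
      · rw [hd, h]; linarith
    · rw [L.conS_eq_jcl hattI]
      exact fun y hy => (L.mem_jcl.mp hy).trans (oz_le_oz.mpr hcd)
    · rw [L.conS_eq_jcl hattI]
      exact fun y hy => (L.mem_jcl.mp hy).trans (oz_le_oz.mpr (by linarith))
    · rw [L.conS_jcl_mul_jcl hd0 hcd0 hdg hcdg, L.conS_eq_jcl hattI,
        show d + (c - d) = c by ring]
  · -- open case
    have huniv : L.gam = Set.univ := (L.gsup_mem_or_univ hI).resolve_left hattI
    have hconI : L.conS I = ↑(L.jop c) := L.conS_eq_jop hI hattI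
    have hstrict : ∀ e ∈ L.eset I, e < c :=
      fun e he => lt_of_le_of_ne (L.le_gsup he) (fun h => hattI (h ▸ he))
    by_cases hBM : B ≤ M
    · by_cases hAM : A ≤ M
      · by_cases hαc : α ≤ c
        · -- 2c
          refine ⟨L.jcl c, L.jop 0, ?_, ?_, ?_, ?_, ?_⟩
          · exact (L.le_jcl_gsup A).trans (fun y hy => (L.mem_jcl.mp hy).trans
              (oz_le_oz.mpr hαc))
          · intro b hb
            rcases eq_or_ne b 0 with rfl | hb0
            · exact (L.jop 0).zero_mem
            · exact L.mem_jop.mpr (by rw [oz_zero]; exact L.w_lt_one_of_mem (hBM hb))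
          · rw [hconI]
            exact fun y hy => le_of_lt (L.mem_jop.mp hy)
          · rw [hconI]
            exact fun y hy => lt_of_lt_of_le (L.mem_jop.mp hy) (oz_le_oz.mpr hc0)
          · rw [L.conS_jcl_mul_jop hc0 (le_refl 0) huniv, hconI, add_zero]
        · push_neg at hαc
          by_cases hattA : α ∈ L.eset A
          · -- 2e
            obtain ⟨a0, ha0A, ha00, hwa0⟩ := hattA
            refine ⟨L.jcl α, L.jop (c - α), ?_, ?_, ?_, ?_, ?_⟩
            · exact L.le_jcl_gsup A
            · intro b hb
              rcases eq_or_ne b 0 with rfl | hb0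
              · exact (L.jop _).zero_mem
              · have hwb : L.w b ≠ 0 := fun h => hb0 (L.w_eq_zero_iff.mp h)
                obtain ⟨eb, heb⟩ := exists_oz hwb
                have : α + eb ∈ L.eset I := ⟨a0 * b, hAB (Ideal.mul_mem_mul ha0A hb),
                  mul_ne_zero ha00 hb0, by rw [L.w_mul, hwa0, heb, oz_mul]⟩
                have h2 := hstrict _ this
                exact L.mem_jop.mpr (by rw [heb]; exact oz_lt_oz.mpr (by linarith))
            · rw [hconI]
              exact fun y hy => le_of_lt (lt_of_lt_of_le (L.mem_jop.mp hy)
                (oz_le_oz.mpr hαc.le))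
            · rw [hconI]
              exact fun y hy => lt_of_lt_of_le (L.mem_jop.mp hy) (oz_le_oz.mpr (by linarith))
            · rw [L.conS_jcl_mul_jop hα0 (by linarith : c - α ≤ 0) huniv, hconI,
                show α + (c - α) = c by ring]
          · -- 2d
            refine ⟨L.jop α, L.jcl (c - α), ?_, ?_, ?_, ?_, ?_⟩
            · intro a ha
              rcases eq_or_ne a 0 with rfl | ha0
              · exact (L.jop _).zero_mem
              · have hwa : L.w a ≠ 0 := fun h => ha0 (L.w_eq_zero_iff.mp h)
                obtain ⟨ea, hea⟩ := exists_oz hwa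
                have heaE : ea ∈ L.eset A := ⟨a, ha, ha0, hea⟩
                have : ea < α := lt_of_le_of_ne (L.le_gsup heaE) (fun h => hattA (h ▸ heaE))
                exact L.mem_jop.mpr (by rw [hea]; exact oz_lt_oz.mpr this)
            · refine (L.le_jcl_gsup B).trans (fun y hy => (L.mem_jcl.mp hy).trans
                (oz_le_oz.mpr (by linarith)))
            · rw [hconI]
              exact fun y hy => lt_of_lt_of_le (L.mem_jop.mp hy) (oz_le_oz.mpr hαc.le)
            · rw [hconI]
              exact fun y hy => le_of_lt (lt_of_lt_of_le (L.mem_jop.mp hy)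
                (oz_le_oz.mpr (by linarith)))
            · rw [mul_comm, L.conS_jcl_mul_jop (by linarith : c - α ≤ 0) hα0 huniv, hconI,
                show c - α + α = c by ring]
      · -- 2b : A not contained in M
        obtain ⟨a1, ha1A, ha1M⟩ := SetLike.not_le_iff_exists.mp hAM
        have ha10 : a1 ≠ 0 := fun h => ha1M (h ▸ M.zero_mem)
        refine ⟨⊤, L.jop c, le_top, ?_, ?_, ?_, ?_⟩
        · intro b hb
          rcases eq_or_ne b 0 with rfl | hb0
          · exact (L.jop _).zero_mem
          · have hwb : L.w b ≠ 0 := fun h => hb0 (L.w_eq_zero_iff.mp h)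
            obtain ⟨eb, heb⟩ := exists_oz hwb
            have : eb ∈ L.eset I := ⟨a1 * b, hAB (Ideal.mul_mem_mul ha1A hb),
              mul_ne_zero ha10 hb0,
              by rw [L.w_mul, L.w_one_of_not_mem ha1M, one_mul, heb]⟩
            exact L.mem_jop.mpr (by rw [heb]; exact oz_lt_oz.mpr (hstrict _ this))
        · exact fun y _ => trivial
        · rw [hconI]
        · rw [Ideal.top_mul, L.conS_jop_self hc0 huniv, hconI]
    · -- 2a : B not contained in M
      obtain ⟨b1, hb1B, hb1M⟩ := SetLike.not_le_iff_exists.mp hBM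
      have hb10 : b1 ≠ 0 := fun h => hb1M (h ▸ M.zero_mem)
      refine ⟨L.jop c, ⊤, ?_, le_top, ?_, ?_, ?_⟩
      · intro a ha
        rcases eq_or_ne a 0 with rfl | ha0
        · exact (L.jop _).zero_mem
        · have hwa : L.w a ≠ 0 := fun h => ha0 (L.w_eq_zero_iff.mp h)
          obtain ⟨ea, hea⟩ := exists_oz hwa
          have : ea ∈ L.eset I := ⟨a * b1, hAB (Ideal.mul_mem_mul ha hb1B),
            mul_ne_zero ha0 hb10,
            by rw [L.w_mul, L.w_one_of_not_mem hb1M, mul_one, hea]⟩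
          exact L.mem_jop.mpr (by rw [hea]; exact oz_lt_oz.mpr (hstrict _ this))
      · rw [hconI]
      · exact fun y _ => trivial
      · rw [Ideal.mul_top, L.conS_jop_self hc0 huniv, hconI]

lemma LocalV.w_pow (L : LocalV R M) (m : R) (n : ℕ) : L.w (m ^ n) = (L.w m) ^ n := by
  rw [LocalV.w, map_pow, map_pow]; rfl

/-! ### global lemmas -/

/-- one-dimensionality: every nonzero prime is maximal -/
lemma prime_isMaximal (V : ∀ M : Ideal R, M.IsMaximal → LocalV R M) {P : Ideal R} (hP : P.IsPrime) (hP0 : P ≠ ⊥) : P.IsMaximal := by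
  obtain ⟨M, hM, hPM⟩ := P.exists_le_maximal hP.ne_top
  set L := V M hM with hL
  suffices h : M ≤ P by rwa [le_antisymm hPM h]
  intro m hm
  obtain ⟨q, hqP, hq0⟩ := Submodule.exists_mem_ne_zero_of_ne_bot hP0
  rcases eq_or_ne m 0 with rfl | hm0
  · exact P.zero_mem
  have hwm : L.w m < 1 := L.w_lt_one_of_mem hm
  have hwm0 : L.w m ≠ 0 := fun h => hm0 (L.w_eq_zero_iff.mp h)
  obtain ⟨t, htm⟩ := exists_oz hwm0
  have ht0 : t < 0 := by
    rw [htm, ← oz_zero] at hwm; exact oz_lt_oz.mp hwm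
  have hwq0 : L.w q ≠ 0 := fun h => hq0 (L.w_eq_zero_iff.mp h)
  obtain ⟨u, huq⟩ := exists_oz hwq0
  obtain ⟨n, hn⟩ := exists_nat_ge (u / t)
  have hnt : (n : ℝ) * t ≤ u := by
    have h2 : (n : ℝ) * t ≤ (u / t) * t := mul_le_mul_of_nonpos_right hn (le_of_lt ht0)
    rwa [div_mul_cancel₀ u (ne_of_lt ht0)] at h2
  have hpow : L.w (m ^ n) ≤ L.w q := by
    rw [L.w_pow, htm, huq, ← oz_pow]
    exact oz_le_oz.mpr hnt
  obtain ⟨s, hsM, a, hsa⟩ := L.exists_smul hq0 hpow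
  have hsP : s ∉ P := fun h => hsM (hPM h)
  have : s * m ^ n ∈ P := by rw [hsa]; exact P.mul_mem_right a hqP
  rcases hP.mem_or_mem this with h | h
  · exact absurd h hsP
  · exact hP.mem_of_pow_mem n h

/-- independence: contractions at `M` are not contained in other maximal ideals -/
lemma conS_not_subset (V : ∀ M : Ideal R, M.IsMaximal → LocalV R M)
    (hfc : FiniteCharacter R) {M N : Ideal R}
    (hM : M.IsMaximal) (hN : N.IsMaximal) (hMN : M ≠ N) {I : Ideal R} (hI : I ≠ ⊥) :
    ¬ ((V M hM).conS I ⊆ ↑N) := by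
  set L := V M hM with hL
  by_cases hIM : I ≤ M
  case neg =>
    rw [L.conS_eq_univ_of_not_le hIM]
    intro h
    exact hN.ne_top ((Ideal.eq_top_iff_one N).mpr (h (Set.mem_univ 1)))
  obtain ⟨x, hxI, hx0⟩ := Submodule.exists_mem_ne_zero_of_ne_bot hI
  by_cases hxN : x ∈ N
  case neg => exact fun h => hxN (h (L.mem_conS_self hxI hx0))
  have hxM : x ∈ M := hIM hxI
  have hT : ({P : Ideal R | P.IsMaximal ∧ x ∈ P}).Finite := hfc x hx0
  classical
  set Tf' : Finset (Ideal R) := hT.toFinset.erase N with hTf'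
  have hMTf' : M ∈ Tf' := Finset.mem_erase.mpr
    ⟨hMN, (Set.Finite.mem_toFinset hT).mpr ⟨hM, hxM⟩⟩
  set J : Ideal R := Tf'.inf id with hJ
  have hJN : ¬ J ≤ N := by
    intro h
    obtain ⟨P, hPTf', hPN⟩ := (Ideal.IsPrime.inf_le' hN.isPrime).mp h
    have hPmax : P.IsMaximal :=
      ((Set.Finite.mem_toFinset hT).mp (Finset.mem_of_mem_erase hPTf')).1
    exact (Finset.mem_erase.mp hPTf').1 (hPmax.eq_of_le hN.ne_top hPN)
  have hsup : J ⊔ N = ⊤ := by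
    have hne : N ⊔ J ≠ N := fun h => hJN (h ▸ le_sup_right)
    have h2 : N ⊔ J = ⊤ := hN.out.2 _ (lt_of_le_of_ne le_sup_left (Ne.symm hne))
    rw [sup_comm]; exact h2
  obtain ⟨a, haJ, b, hbN, hab⟩ := Submodule.mem_sup.mp ((Ideal.eq_top_iff_one _).mp hsup)
  have haM : a ∈ M := by
    have : J ≤ M := Finset.inf_le hMTf'
    exact this haJ
  have hbM : b ∉ M := by
    intro hbM
    exact hM.ne_top ((Ideal.eq_top_iff_one M).mpr (hab ▸ M.add_mem haM hbM))
  have haN : a ∉ N := by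
    intro haN
    exact hN.ne_top ((Ideal.eq_top_iff_one N).mpr (hab ▸ N.add_mem haN hbN))
  have hrad : a * b ∈ (Ideal.span {x}).radical := by
    rw [Ideal.radical_eq_sInf]
    refine Ideal.mem_sInf.mpr ?_
    rintro Q ⟨hxQ, hQ⟩
    have hxQ' : x ∈ Q := hxQ (Ideal.subset_span rfl)
    have hQ0 : Q ≠ ⊥ := by
      intro h
      rw [h] at hxQ'
      exact hx0 hxQ'
    have hQmax : Q.IsMaximal := prime_isMaximal V hQ hQ0
    rcases eq_or_ne Q N with rfl | hQN
    · exact Q.mul_mem_left a hbN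
    · have hQT : Q ∈ Tf' := Finset.mem_erase.mpr
        ⟨hQN, (Set.Finite.mem_toFinset hT).mpr ⟨hQmax, hxQ'⟩⟩
      have : J ≤ Q := Finset.inf_le hQT
      exact Q.mul_mem_right b (this haJ)
  obtain ⟨n, hn⟩ := hrad
  have hn1 : n ≠ 0 := by
    rintro rfl
    rw [pow_zero] at hn
    have : Ideal.span {x} ≤ M := Ideal.span_le.mpr (Set.singleton_subset_iff.mpr hxM)
    exact hM.ne_top ((Ideal.eq_top_iff_one M).mpr (this hn))
  have hsxI : Ideal.span {x} ≤ I := Ideal.span_le.mpr (Set.singleton_subset_iff.mpr hxI)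
  have hprodI : b ^ n * a ^ n ∈ I := by
    refine hsxI ?_
    have : (a * b) ^ n = b ^ n * a ^ n := by rw [mul_pow, mul_comm]
    exact this ▸ hn
  have ha0 : a ≠ 0 := fun h => haN (h ▸ N.zero_mem)
  have hb0 : b ≠ 0 := fun h => hbM (h ▸ M.zero_mem)
  have hbnM : b ^ n ∉ M := fun h => hbM (hM.isPrime.mem_of_pow_mem n h)
  have hanN : a ^ n ∉ N := fun h => haN (hN.isPrime.mem_of_pow_mem n h)
  intro hcon
  refine hanN (hcon ⟨b ^ n * a ^ n, hprodI, mul_ne_zero (pow_ne_zero n hb0) (pow_ne_zero n ha0), ?_⟩)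
  rw [L.w_mul, L.w_one_of_not_mem hbnM, one_mul]

/-- globalization: membership can be checked on all contractions -/
lemma mem_of_forall_conS (V : ∀ M : Ideal R, M.IsMaximal → LocalV R M) {X : Ideal R} {y : R}
    (h : ∀ (M : Ideal R) (hM : M.IsMaximal), y ∈ (V M hM).conS X) : y ∈ X := by
  by_contra hy
  have hcol : X.colon (Ideal.span {y}) ≠ ⊤ := by
    intro h1
    have h2 : (1 : R) ∈ X.colon (Ideal.span {y}) := (Ideal.eq_top_iff_one _).mp h1
    have h3 := Ideal.mem_colon_span_singleton.mp h2
    rw [one_mul] at h3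
    exact hy h3
  obtain ⟨N, hN, hle⟩ := Ideal.exists_le_maximal _ hcol
  obtain ⟨x, hxX, hx0, hw⟩ := h N hN
  obtain ⟨s, hsN, a, hsa⟩ := (V N hN).exists_smul hx0 hw
  exact hsN (hle (Ideal.mem_colon_span_singleton.mpr
    (by rw [hsa]; exact X.mul_mem_right a hxX)))

lemma le_mul_of_coprime {A P Q : Ideal R} (h : P ⊔ Q = ⊤) (hP : A ≤ P) (hQ : A ≤ Q) :
    A ≤ P * Q := by
  intro a ha
  obtain ⟨p, hp, q, hq, hpq⟩ := Submodule.mem_sup.mp ((Ideal.eq_top_iff_one _).mp h)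
  have hsplit : a = p * a + q * a := by rw [← add_mul, hpq, one_mul]
  rw [hsplit]
  refine Ideal.add_mem _ (Ideal.mul_mem_mul hp (hQ ha)) ?_
  rw [mul_comm q a]
  exact Ideal.mul_mem_mul (hP ha) hq

lemma le_prod_of_pairwise_coprime {ι : Type*} [DecidableEq ι] {T : Finset ι} {J : ι → Ideal R}
    {A : Ideal R} (hpair : ∀ i ∈ T, ∀ j ∈ T, i ≠ j → J i ⊔ J j = ⊤)
    (hle : ∀ i ∈ T, A ≤ J i) : A ≤ ∏ i ∈ T, J i := by
  classical
  induction T using Finset.cons_induction with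
  | empty => rw [Finset.prod_empty, Ideal.one_eq_top]; exact le_top
  | cons i T hiT ih =>
    rw [Finset.prod_cons]
    have hsup : (J i) ⊔ (∏ j ∈ T, J j) = ⊤ :=
      Ideal.sup_prod_eq_top (fun j hj => hpair i (Finset.mem_cons_self i T) j
        (Finset.mem_cons_of_mem hj) (fun h => hiT (h ▸ hj)))
    exact le_mul_of_coprime hsup (hle i (Finset.mem_cons_self i T))
      (ih (fun a ha b hb hab => hpair a (Finset.mem_cons_of_mem ha) b
        (Finset.mem_cons_of_mem hb) hab) (fun a ha => hle a (Finset.mem_cons_of_mem ha)))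

lemma prod_not_le_prime {ι : Type*} {T : Finset ι} {J : ι → Ideal R} {N : Ideal R}
    (hN : N.IsPrime) (h : ∀ i ∈ T, ¬ J i ≤ N) : ¬ (∏ i ∈ T, J i) ≤ N := by
  intro hle
  obtain ⟨i, hiT, hi⟩ := (Ideal.IsPrime.prod_le hN).mp hle
  exact h i hiT hi

end SharpAux

/-- If `D` has finite character and for every maximal ideal `M` the localization
`D_M` is a valuation domain (the ring of integers of a real-valued valuation `v` on
the fraction field) whose value group is a complete subgroup of `ℝ`, then `D` is sharp. -/
theorem finiteCharacter_valuation_sharp (R : Type*) [CommRing R] [IsDomain R]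
    (hfc : FiniteCharacter R)
    (hval : ∀ M : Ideal R, M.IsMaximal →
      ∃ v : Valuation (FractionRing R) (WithZero (Multiplicative ℝ)),
        (∀ x : FractionRing R, v x ≤ 1 ↔
          ∃ a s : R, s ∉ M ∧ x * algebraMap R (FractionRing R) s =
            algebraMap R (FractionRing R) a) ∧
        IsCompleteRealSubgroup
          {r : ℝ | ∃ x : FractionRing R, v x = (Multiplicative.ofAdd r : Multiplicative ℝ)}) :
    IsSharpDomain R := by
  classical
  intro I A B hI hA hB hAB
  have V : ∀ M : Ideal R, M.IsMaximal → SharpAux.LocalV R M := fun M hM =>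
    ⟨(hval M hM).choose, (hval M hM).choose_spec.1, (hval M hM).choose_spec.2, hM⟩
  obtain ⟨x0, hx0I, hx00⟩ := Submodule.exists_mem_ne_zero_of_ne_bot hI
  have hS : ({M : Ideal R | M.IsMaximal ∧ x0 ∈ M}).Finite := hfc x0 hx00
  set T : Finset (Ideal R) := hS.toFinset with hT
  have hTmem : ∀ M ∈ T, M.IsMaximal ∧ x0 ∈ M := fun M hM => (Set.Finite.mem_toFinset hS).mp hM
  have key : ∀ (M : Ideal R) (hM : M.IsMaximal), ∃ q : Ideal R × Ideal R,
      A ≤ q.1 ∧ B ≤ q.2 ∧ (V M hM).conS I ⊆ ↑q.1 ∧ (V M hM).conS I ⊆ ↑q.2 ∧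
        (V M hM).conS (q.1 * q.2) = (V M hM).conS I := by
    intro M hM
    obtain ⟨A', B', h1, h2, h3, h4, h5⟩ := (V M hM).local_sharp hI hA hB hAB
    exact ⟨(A', B'), h1, h2, h3, h4, h5⟩
  choose p hp1 hp2 hp3 hp4 hp5 using key
  set FA : Ideal R → Ideal R := fun M => if h : M.IsMaximal then (p M h).1 else ⊤ with hFA
  set FB : Ideal R → Ideal R := fun M => if h : M.IsMaximal then (p M h).2 else ⊤ with hFB
  have hFAe : ∀ (M : Ideal R) (hM : M.IsMaximal), FA M = (p M hM).1 := fun M hM => dif_pos hM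
  have hFBe : ∀ (M : Ideal R) (hM : M.IsMaximal), FB M = (p M hM).2 := fun M hM => dif_pos hM
  have hconFA : ∀ (M : Ideal R) (hM : M.IsMaximal), (V M hM).conS I ⊆ ↑(FA M) := by
    intro M hM; rw [hFAe M hM]; exact hp3 M hM
  have hconFB : ∀ (M : Ideal R) (hM : M.IsMaximal), (V M hM).conS I ⊆ ↑(FB M) := by
    intro M hM; rw [hFBe M hM]; exact hp4 M hM
  have honly : ∀ (Z : Ideal R → Ideal R),
      (∀ (M : Ideal R) (hM : M.IsMaximal), (V M hM).conS I ⊆ ↑(Z M)) →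
      ∀ M ∈ T, ∀ (N : Ideal R), N.IsMaximal → Z M ≤ N → M = N := by
    intro Z hZ M hMT N hN hle
    by_contra hMN
    exact SharpAux.conS_not_subset V hfc (hTmem M hMT).1 hN hMN hI
      (fun y hy => hle (hZ M (hTmem M hMT).1 hy))
  have hpair : ∀ (Z : Ideal R → Ideal R),
      (∀ (M : Ideal R) (hM : M.IsMaximal), (V M hM).conS I ⊆ ↑(Z M)) →
      ∀ i ∈ T, ∀ j ∈ T, i ≠ j → Z i ⊔ Z j = ⊤ := by
    intro Z hZ i hi j hj hij
    by_contra hne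
    obtain ⟨P, hP, hle⟩ := Ideal.exists_le_maximal _ hne
    have h1 : i = P := honly Z hZ i hi P hP (le_sup_left.trans hle)
    have h2 : j = P := honly Z hZ j hj P hP (le_sup_right.trans hle)
    exact hij (h1.trans h2.symm)
  set A' := ∏ M ∈ T, FA M with hA'
  set B' := ∏ M ∈ T, FB M with hB'
  have hAA' : A ≤ A' := SharpAux.le_prod_of_pairwise_coprime (hpair FA hconFA)
    (fun M hMT => by rw [hFAe M (hTmem M hMT).1]; exact hp1 M (hTmem M hMT).1)
  have hBB' : B ≤ B' := SharpAux.le_prod_of_pairwise_coprime (hpair FB hconFB)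
    (fun M hMT => by rw [hFBe M (hTmem M hMT).1]; exact hp2 M (hTmem M hMT).1)
  have hprod : A' * B' = ∏ M ∈ T, (FA M * FB M) := by
    rw [hA', hB', ← Finset.prod_mul_distrib]
  have hZno : ∀ M ∈ T, ∀ (N : Ideal R), N.IsMaximal → M ≠ N → ¬ (FA M * FB M ≤ N) := by
    intro M hMT N hN hMN hle
    have hMmax := (hTmem M hMT).1
    have hnsub := SharpAux.conS_not_subset V hfc hMmax hN hMN hI
    obtain ⟨u, hu, huN⟩ := Set.not_subset.mp hnsub
    have huA : u ∈ FA M := hconFA M hMmax hu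
    have huB : u ∈ FB M := hconFB M hMmax hu
    have huu : u * u ∈ N := hle (Ideal.mul_mem_mul huA huB)
    rcases hN.isPrime.mem_or_mem huu with h | h <;> exact huN h
  have hcon : ∀ (N : Ideal R) (hN : N.IsMaximal),
      (V N hN).conS (A' * B') = (V N hN).conS I := by
    intro N hN
    rw [hprod]
    by_cases hNT : N ∈ T
    · rw [← Finset.mul_prod_erase T _ hNT]
      have hY : ¬ (∏ M ∈ T.erase N, (FA M * FB M)) ≤ N :=
        SharpAux.prod_not_le_prime hN.isPrime (fun M hM => hZno M
          (Finset.mem_of_mem_erase hM) N hN (Finset.ne_of_mem_erase hM))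
      have hx0A : x0 ∈ FA N := hconFA N hN ((V N hN).mem_conS_self hx0I hx00)
      have hx0B : x0 ∈ FB N := hconFB N hN ((V N hN).mem_conS_self hx0I hx00)
      have hZ0 : FA N * FB N ≠ ⊥ := by
        intro hbot
        have h2 : x0 * x0 ∈ (⊥ : Ideal R) := hbot ▸ Ideal.mul_mem_mul hx0A hx0B
        exact mul_ne_zero hx00 hx00 (by simpa using h2)
      rw [(V N hN).conS_mul_of_not_le hZ0 hY, hFAe N hN, hFBe N hN]
      exact hp5 N hN
    · have hx0N : x0 ∉ N := fun h => hNT ((Set.Finite.mem_toFinset hS).mpr ⟨hN, h⟩)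
      have hIN : ¬ I ≤ N := fun h => hx0N (h hx0I)
      have hXN : ¬ (∏ M ∈ T, (FA M * FB M)) ≤ N :=
        SharpAux.prod_not_le_prime hN.isPrime (fun M hMT => hZno M hMT N hN
          (fun h => hNT (h ▸ hMT)))
      rw [(V N hN).conS_eq_univ_of_not_le hXN, (V N hN).conS_eq_univ_of_not_le hIN]
  refine ⟨A', B', hAA', hBB', le_antisymm ?_ ?_⟩
  · intro y hy
    rcases eq_or_ne y 0 with rfl | hy0
    · exact (A' * B').zero_mem
    refine SharpAux.mem_of_forall_conS V (fun N hN => ?_)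
    rw [hcon N hN]
    exact (V N hN).mem_conS_self hy hy0
  · intro y hy
    rcases eq_or_ne y 0 with rfl | hy0
    · exact I.zero_mem
    refine SharpAux.mem_of_forall_conS V (fun N hN => ?_)
    rw [← hcon N hN]
    exact (V N hN).mem_conS_self hy hy0
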